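/- Let $K$ be a totally real number field with $[K : \mathbb{Q}] \geq 2$, let $R \subseteq \mathcal{O}_K$ be a subring of finite additive index in $\mathcal{O}_K$, and let $n \geq 2$ be an integer. Then there exist elements $f, g \in R$ with $g \neq 0$ such that both $f - g$ and $f + (n-1)g$ lie in $R \cap \mathcal{O}_K^\times$, i.e., they are elements of $R$ that are units of $\mathcal{O}_K$. -/

import Mathlib

open NumberField

/-- Let `R` be a subring of finite additive index in the ring of integers of a totally real
number field `K` of degree at least `2`, and `n ≥ 2`. Then there are `f, g ∈ R` with `g ≠ 0`
such that `f - g` and `f + (n - 1) g` are elements of `R` that are units of `𝓞 K`. -/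
theorem exists_f_g_in_subring_units_of_totallyReal (K : Type*) [Field K] [NumberField K]
    (htr : ∀ φ : K →+* ℂ, NumberField.ComplexEmbedding.IsReal φ)
    (hd : 2 ≤ Module.finrank ℚ K) (R : Subring (𝓞 K)) (hfin : R.toAddSubgroup.index ≠ 0)
    (n : ℕ) (hn : 2 ≤ n) :
    ∃ f g : R, g ≠ 0 ∧ IsUnit ((f : 𝓞 K) - (g : 𝓞 K)) ∧
      IsUnit ((f : 𝓞 K) + ((n - 1 : ℕ) : 𝓞 K) * (g : 𝓞 K)) := by
  classical
  -- there are at least two infinite places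
  have hcard : 2 ≤ Fintype.card (InfinitePlace K) := by
    have hmult : ∀ w : InfinitePlace K, InfinitePlace.mult w = 1 := fun w => by
      rw [InfinitePlace.mult, if_pos (InfinitePlace.isReal_iff.mpr (htr w.embedding))]
    have hs := InfinitePlace.sum_mult_eq (K := K)
    rw [Finset.sum_congr rfl (fun w _ => hmult w)] at hs
    simp only [Finset.sum_const, smul_eq_mul, mul_one, Finset.card_univ] at hs
    omega
  -- a unit of infinite order
  obtain ⟨w₁⟩ : Nonempty (InfinitePlace K) := inferInstance
  obtain ⟨u, hu⟩ := NumberField.Units.dirichletUnitTheorem.exists_unit K w₁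
  obtain ⟨w₂, hw₂⟩ := Fintype.exists_ne_of_one_lt_card (by omega) w₁
  have hunotfin : ¬ IsOfFinOrder u := by
    intro hfo
    have htors : u ∈ NumberField.Units.torsion K := (CommGroup.mem_torsion _).mpr hfo
    have h1 := (NumberField.Units.mem_torsion K).mp htors w₂
    have h2 := hu w₂ hw₂
    rw [h1] at h2
    simp at h2
  -- the modulus
  set m : ℕ := R.toAddSubgroup.index with hm
  set N : ℕ := n * m with hN
  have hNne : ((N : 𝓞 K)) ≠ 0 := by
    have : N ≠ 0 := by positivity
    exact_mod_cast Nat.cast_ne_zero.mpr this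
  set I : Ideal (𝓞 K) := Ideal.span {(N : 𝓞 K)} with hI
  have hIne : I ≠ ⊥ := by
    rw [hI, Ne, Ideal.span_singleton_eq_bot]
    exact hNne
  haveI : Fintype ((𝓞 K) ⧸ I) := @Fintype.ofFinite _ (Ideal.finiteQuotientOfFreeOfNeBot I hIne)
  haveI : Finite ((𝓞 K) ⧸ I) := Finite.of_fintype _
  -- pigeonhole on powers of u modulo I
  obtain ⟨k, l, hkl, heq⟩ := Finite.exists_ne_map_eq_of_infinite
    (fun j : ℕ => (Ideal.Quotient.mk I) ((u ^ j : (𝓞 K)ˣ) : 𝓞 K))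
  wlog hlt : k < l generalizing k l
  · exact this l k hkl.symm heq.symm (by omega)
  set w : (𝓞 K)ˣ := u ^ (l - k) with hw
  have hwne1 : w ≠ 1 := by
    intro h
    exact hunotfin (isOfFinOrder_iff_pow_eq_one.mpr ⟨l - k, by omega, h⟩)
  have hsub : ((u ^ l : (𝓞 K)ˣ) : 𝓞 K) - ((u ^ k : (𝓞 K)ˣ) : 𝓞 K) ∈ I := by
    rw [← Ideal.Quotient.eq]
    exact heq.symm
  have e2 : (u⁻¹ ^ k * u ^ k : (𝓞 K)ˣ) = 1 := by group
  have e1 : (u⁻¹ ^ k * u ^ l : (𝓞 K)ˣ) = w := by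
    rw [hw, ← Nat.add_sub_cancel' hlt.le, pow_add, ← mul_assoc, e2, one_mul]
    congr 1
    omega
  have key : ((w : 𝓞 K) - 1) = ((u⁻¹ ^ k : (𝓞 K)ˣ) : 𝓞 K) *
      (((u ^ l : (𝓞 K)ˣ) : 𝓞 K) - ((u ^ k : (𝓞 K)ˣ) : 𝓞 K)) := by
    rw [mul_sub, ← Units.val_mul, ← Units.val_mul, e1, e2, Units.val_one]
  have hwI : (w : 𝓞 K) - 1 ∈ I := by
    rw [key]
    exact I.mul_mem_left _ hsub
  obtain ⟨x, hx⟩ : ∃ x, (w : 𝓞 K) - 1 = (N : 𝓞 K) * x := by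
    obtain ⟨x, hx⟩ := (Ideal.mem_span_singleton).mp hwI
    exact ⟨x, hx⟩
  -- define f and g
  have hg0 : (m : 𝓞 K) * x ∈ R := by
    have := AddSubgroup.nsmul_index_mem R.toAddSubgroup x
    rwa [← nsmul_eq_mul]
  have hf0 : 1 + (m : 𝓞 K) * x ∈ R := R.add_mem R.one_mem hg0
  refine ⟨⟨1 + (m : 𝓞 K) * x, hf0⟩, ⟨(m : 𝓞 K) * x, hg0⟩, ?_, ?_, ?_⟩
  · intro h
    have h0 : (m : 𝓞 K) * x = 0 := by
      simpa using congrArg (Subtype.val) h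
    have hmne : (m : 𝓞 K) ≠ 0 := by
      exact_mod_cast Nat.cast_ne_zero.mpr hfin
    have hx0 : x = 0 := by
      rcases mul_eq_zero.mp h0 with h | h
      · exact absurd h hmne
      · exact h
    rw [hx0, mul_zero] at hx
    apply hwne1
    ext
    have : (w : 𝓞 K) = 1 := sub_eq_zero.mp hx
    simpa using this
  · simp only [add_sub_cancel_right]
    exact isUnit_one
  · have hcast : ((n - 1 : ℕ) : 𝓞 K) = (n : 𝓞 K) - 1 := by
      have : (1 : ℕ) ≤ n := by omega
      push_cast [Nat.cast_sub this]
      ring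
    have hxN : (w : 𝓞 K) - 1 = (n : 𝓞 K) * ((m : 𝓞 K) * x) := by
      rw [hx, hN]
      push_cast
      ring
    have : (1 + (m : 𝓞 K) * x) + ((n - 1 : ℕ) : 𝓞 K) * ((m : 𝓞 K) * x) = (w : 𝓞 K) := by
      rw [hcast]
      linear_combination -hxN
    rw [this]
    exact w.isUnit
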